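/- Let A be a finite nonempty type (actions), c > 0 a real constant, Q : ℕ → A → ℝ with a uniform bound M such that |Q n a| ≤ M for all n and a, and let a : ℕ → A be a sequence of selected actions. For n ∈ ℕ and b ∈ A let N n b = |{ k < n | a k = b }| be the number of times b has been selected before time n. Suppose the selection is greedy with respect to the UCB-style index: for every n and every b ∈ A, Q n b + c · √n / (1 + N n b) ≤ Q n (a n) + c · √n / (1 + N n (a n)). Then for every b ∈ A the set { n | a n = b } is infinite. -/

import Mathlib

open Finset in
theorem ucb_selects_every_action_infinitely_often
    {A : Type*} [Fintype A] [Nonempty A] [DecidableEq A]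
    (c : ℝ) (hc : 0 < c)
    (Q : ℕ → A → ℝ) (M : ℝ) (hM : ∀ n b, |Q n b| ≤ M)
    (a : ℕ → A)
    (N : ℕ → A → ℕ)
    (hN : ∀ n b, N n b = ((Finset.range n).filter (fun k => a k = b)).card)
    (hgreedy : ∀ n b, Q n b + c * Real.sqrt n / (1 + (N n b : ℝ)) ≤
      Q n (a n) + c * Real.sqrt n / (1 + (N n (a n) : ℝ))) :
    ∀ b : A, {n | a n = b}.Infinite := by
  intro b
  by_contra hfin
  rw [Set.not_infinite] at hfin
  obtain ⟨T, hT⟩ := hfin.bddAbove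
  have hTb : ∀ n, T + 1 ≤ n → a n ≠ b := by
    intro n hn hab
    have h := hT (show n ∈ {n | a n = b} from hab)
    omega
  have hM0 : 0 ≤ M := (abs_nonneg _).trans (hM 0 b)
  set K : ℕ := N (T + 1) b with hK
  have hNb : ∀ n, T + 1 ≤ n → N n b = K := by
    intro n hn
    rw [hK, hN, hN]
    congr 1
    ext k
    simp only [Finset.mem_filter, Finset.mem_range]
    constructor
    · rintro ⟨hk, hkb⟩
      have := hT (show k ∈ {n | a n = b} from hkb)
      exact ⟨by omega, hkb⟩
    · rintro ⟨hk, hkb⟩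
      exact ⟨by omega, hkb⟩
  set B : ℝ := 2 * M * (1 + K) * (2 + K) / c with hB
  have hB0 : 0 ≤ B := by
    apply div_nonneg _ hc.le
    positivity
  -- key: for large n, the count of the selected action is ≤ K
  have hkey : ∀ n, T + 1 ≤ n → B < Real.sqrt n → N n (a n) ≤ K := by
    intro n hn hsn
    have hs0 : 0 < Real.sqrt n := lt_of_le_of_lt hB0 hsn
    have hg := hgreedy n b
    rw [hNb n hn] at hg
    have hQb : -M ≤ Q n b := neg_le_of_abs_le (hM n b)
    have hQa : Q n (a n) ≤ M := le_of_abs_le (hM n (a n))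
    set Na : ℕ := N n (a n) with hNa
    have h1 : c * Real.sqrt n / (1 + (K : ℝ)) - 2 * M ≤ c * Real.sqrt n / (1 + (Na : ℝ)) := by
      nlinarith [hg]
    have hden1 : (0:ℝ) < 1 + (K:ℝ) := by positivity
    have hden2 : (0:ℝ) < 2 + (K:ℝ) := by positivity
    have h2 : c * Real.sqrt n / (2 + (K : ℝ)) < c * Real.sqrt n / (1 + (K : ℝ)) - 2 * M := by
      rw [div_sub' (ne_of_gt hden1), div_lt_div_iff₀ hden2 hden1]
      have : 2 * M * (1 + (K:ℝ)) * (2 + (K:ℝ)) < c * Real.sqrt n := by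
        have := (div_lt_iff₀ hc).mp (show B < Real.sqrt n from hsn)
        calc 2 * M * (1 + (K:ℝ)) * (2 + (K:ℝ)) = B * c := by
              rw [hB]; field_simp
          _ < Real.sqrt n * c := by
              exact mul_lt_mul_of_pos_right hsn hc
          _ = c * Real.sqrt n := mul_comm _ _
      nlinarith
    have h3 : c * Real.sqrt n / (2 + (K : ℝ)) < c * Real.sqrt n / (1 + (Na : ℝ)) :=
      lt_of_lt_of_le h2 h1
    have hcs : 0 < c * Real.sqrt n := by positivity
    have hdenNa : (0:ℝ) < 1 + (Na:ℝ) := by positivity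
    have h4 : (1 : ℝ) + (Na : ℝ) < 2 + (K : ℝ) := by
      rw [div_lt_div_iff₀ hden2 hdenNa] at h3
      exact lt_of_mul_lt_mul_left (by linarith [h3]) hcs.le
    have : (Na : ℝ) < (K : ℝ) + 1 := by linarith
    exact_mod_cast Nat.lt_succ_iff.mp (by exact_mod_cast this)
  -- choose n₀ past which the key lemma applies
  set n₀ : ℕ := max (T + 1) (⌈B ^ 2⌉₊ + 1) with hn₀
  have hsqrt : ∀ n, n₀ ≤ n → B < Real.sqrt n := by
    intro n hn
    have h1 : (⌈B ^ 2⌉₊ + 1 : ℕ) ≤ n := le_trans (le_max_right _ _) hn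
    have h2 : B ^ 2 < (n : ℝ) := by
      calc B ^ 2 ≤ (⌈B ^ 2⌉₊ : ℝ) := Nat.le_ceil _
        _ < (n : ℝ) := by exact_mod_cast Nat.lt_of_succ_le h1
    exact (Real.lt_sqrt (by positivity)).mpr h2
  have hkey' : ∀ n, n₀ ≤ n → N n (a n) ≤ K := fun n hn =>
    hkey n (le_trans (le_max_left _ _) hn) (hsqrt n hn)
  -- recurrence for N
  have hrec : ∀ n x, N (n + 1) x = N n x + (if a n = x then 1 else 0) := by
    intro n x
    rw [hN, hN, Finset.range_add_one, Finset.filter_insert]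
    split
    · rw [Finset.card_insert_of_notMem (by simp)]
    · simp
  -- all counts bounded after n₀
  have hbound : ∀ n, n₀ ≤ n → ∀ x, N n x ≤ max (N n₀ x) (K + 1) := by
    intro n hn
    induction n, hn using Nat.le_induction with
    | base => intro x; exact le_max_left _ _
    | succ n hn ih =>
      intro x
      rw [hrec]
      by_cases hax : a n = x
      · rw [if_pos hax]
        have hle : N n x ≤ K := hax ▸ hkey' n hn
        exact le_trans (by omega) (le_max_right _ _)
      · rw [if_neg hax, add_zero]
        exact ih x
  -- contradiction via total count
  set C : ℕ := ∑ x : A, max (N n₀ x) (K + 1) with hC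
  have htotal : ∀ n, ∑ x : A, N n x = n := by
    intro n
    have := Finset.card_eq_sum_card_fiberwise
      (f := a) (s := Finset.range n) (t := Finset.univ) (fun k _ => Finset.mem_univ (a k))
    rw [Finset.card_range] at this
    calc ∑ x : A, N n x
        = ∑ x : A, ((Finset.range n).filter (fun k => a k = x)).card :=
          Finset.sum_congr rfl (fun x _ => hN n x)
      _ = n := this.symm
  have hfinal : max n₀ (C + 1) ≤ C := by
    set n := max n₀ (C + 1) with hn
    calc n = ∑ x : A, N n x := (htotal n).symm
      _ ≤ ∑ x : A, max (N n₀ x) (K + 1) :=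
          Finset.sum_le_sum (fun x _ => hbound n (le_max_left _ _) x)
      _ = C := rfl
  omega
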